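/- Suppose P ∈ ℂ^{n×n} is a Hermitian positive definite solution of the anti-Riccati equation −Q = A₂^H P^# A₂ − A₂^H P^# B₂ (R + B₂^H P^# B₂)^{-1} B₂^H P^# A₂ − P. Then the matrix X = Q₀^{-1/2} (P^{-1} + (A₂ Q^{-1} A₂^H)^# + (B₂ R^{-1} B₂^H)^#) Q₀^{-1/2} is Hermitian positive definite and satisfies the nonlinear matrix equation X + A^H X^{-#} A = I_n, where A = Q₀^{-#/2} A₂ Q^{-1} Q₀^{-1/2}. -/

import Mathlib

open Matrix Filter Topology
open scoped ENNReal ComplexOrder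

noncomputable section

/-- Entrywise complex conjugate of a matrix, `M^#`. -/
def mconj {k l : Type*} (A : Matrix k l ℂ) : Matrix k l ℂ := A.map (starRingEnd ℂ)

variable {n m : ℕ}

/-- The antilinear system `x(k+1) = A₂^# x^#(k) + B₂^# u^#(k)` is stabilizable if some
feedback `u(k) = K₁x(k) + K₂^#x^#(k)` drives every closed-loop solution to zero. -/
def AntiStabilizable (A₂ : Matrix (Fin n) (Fin n) ℂ) (B₂ : Matrix (Fin n) (Fin m) ℂ) :
    Prop :=
  ∃ K₁ K₂ : Matrix (Fin m) (Fin n) ℂ, ∀ x : ℕ → (Fin n → ℂ),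
    (∀ k : ℕ, x (k + 1) =
        mconj A₂ *ᵥ star (x k) + mconj B₂ *ᵥ star (K₁ *ᵥ x k + mconj K₂ *ᵥ star (x k))) →
    Tendsto x atTop (𝓝 0)

/-- The trajectory of the antilinear system `x(k+1) = A₂^# x^#(k) + B₂^# u^#(k)` from
the initial condition `x₀` under the control sequence `u`. -/
def atraj (A₂ : Matrix (Fin n) (Fin n) ℂ) (B₂ : Matrix (Fin n) (Fin m) ℂ)
    (x₀ : Fin n → ℂ) (u : ℕ → Fin m → ℂ) : ℕ → Fin n → ℂ
  | 0 => x₀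
  | k + 1 => mconj A₂ *ᵥ star (atraj A₂ B₂ x₀ u k) + mconj B₂ *ᵥ star (u k)

/-- The quadratic cost `J = Σ_k (x(k)^H Q x(k) + u(k)^H R u(k))`, valued in `[0,∞]`. -/
def cost (Q : Matrix (Fin n) (Fin n) ℂ) (R : Matrix (Fin m) (Fin m) ℂ)
    (x : ℕ → Fin n → ℂ) (u : ℕ → Fin m → ℂ) : ℝ≥0∞ :=
  ∑' k : ℕ, ENNReal.ofReal ((star (x k) ⬝ᵥ (Q *ᵥ x k)).re + (star (u k) ⬝ᵥ (R *ᵥ u k)).re)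

/-- The LQR problem for the antilinear system is solvable: for every initial condition
there is a control of finite cost minimizing the cost. -/
def LQRSolvable (A₂ : Matrix (Fin n) (Fin n) ℂ) (B₂ : Matrix (Fin n) (Fin m) ℂ)
    (Q : Matrix (Fin n) (Fin n) ℂ) (R : Matrix (Fin m) (Fin m) ℂ) : Prop :=
  ∀ x₀ : Fin n → ℂ, ∃ u : ℕ → Fin m → ℂ,
    cost Q R (atraj A₂ B₂ x₀ u) u < ⊤ ∧
    ∀ u' : ℕ → Fin m → ℂ, cost Q R (atraj A₂ B₂ x₀ u) u ≤ cost Q R (atraj A₂ B₂ x₀ u') u'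

/-- The anti-Riccati equation
`-Q = A₂^H P^# A₂ - A₂^H P^# B₂ (R + B₂^H P^# B₂)⁻¹ B₂^H P^# A₂ - P`. -/
def AntiRiccati (A₂ : Matrix (Fin n) (Fin n) ℂ) (B₂ : Matrix (Fin n) (Fin m) ℂ)
    (Q : Matrix (Fin n) (Fin n) ℂ) (R : Matrix (Fin m) (Fin m) ℂ)
    (P : Matrix (Fin n) (Fin n) ℂ) : Prop :=
  -Q = A₂ᴴ * mconj P * A₂ -
      A₂ᴴ * mconj P * B₂ * (R + B₂ᴴ * mconj P * B₂)⁻¹ * (B₂ᴴ * mconj P * A₂) - P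

/-- `Q₀ = Q⁻¹ + (A₂ Q⁻¹ A₂^H)^# + (B₂ R⁻¹ B₂^H)^#`. -/
def Qzero (A₂ : Matrix (Fin n) (Fin n) ℂ) (B₂ : Matrix (Fin n) (Fin m) ℂ)
    (Q : Matrix (Fin n) (Fin n) ℂ) (R : Matrix (Fin m) (Fin m) ℂ) :
    Matrix (Fin n) (Fin n) ℂ :=
  Q⁻¹ + mconj (A₂ * Q⁻¹ * A₂ᴴ) + mconj (B₂ * R⁻¹ * B₂ᴴ)

section Helpers

variable {k : ℕ}

lemma mconj_mul {A : Matrix (Fin k) (Fin k) ℂ} {B : Matrix (Fin k) (Fin k) ℂ} :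
    mconj (A * B) = mconj A * mconj B :=
  Matrix.map_mul

lemma mconj_add (A B : Matrix (Fin k) (Fin k) ℂ) :
    mconj (A + B) = mconj A + mconj B :=
  Matrix.map_add _ (by simp) _ _

lemma mconj_one : mconj (1 : Matrix (Fin k) (Fin k) ℂ) = 1 := by
  ext i j
  by_cases h : i = j <;> simp [mconj, Matrix.one_apply, h]

lemma mconj_mconj (A : Matrix (Fin k) (Fin k) ℂ) : mconj (mconj A) = A := by
  ext i j; simp [mconj]

lemma mconj_eq_transpose {A : Matrix (Fin k) (Fin k) ℂ} (h : A.IsHermitian) :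
    mconj A = Aᵀ := by
  ext i j
  have h' := congrFun (congrFun h j) i
  simp only [Matrix.conjTranspose_apply] at h'
  simp [mconj, ← h']

lemma posDef_transpose {M : Matrix (Fin k) (Fin k) ℂ} (hM : M.PosDef) : Mᵀ.PosDef := by
  refine Matrix.PosDef.of_dotProduct_mulVec_pos hM.1.transpose (fun x hx => ?_)
  have h := hM.dotProduct_mulVec_pos (x := star x) (by simpa using hx)
  rw [Matrix.mulVec_transpose]
  rw [star_star, Matrix.dotProduct_mulVec, dotProduct_comm] at h
  exact h

lemma mconj_posDef {M : Matrix (Fin k) (Fin k) ℂ} (hM : M.PosDef) : (mconj M).PosDef := by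
  rw [mconj_eq_transpose hM.1]; exact posDef_transpose hM

lemma mconj_posSemidef {M : Matrix (Fin k) (Fin k) ℂ} (hM : M.PosSemidef) :
    (mconj M).PosSemidef := by
  rw [mconj_eq_transpose hM.1]; exact hM.transpose

lemma mconj_inv {M : Matrix (Fin k) (Fin k) ℂ} (hM : IsUnit M.det) :
    mconj (M⁻¹) = (mconj M)⁻¹ := by
  symm
  apply Matrix.inv_eq_right_inv
  rw [← mconj_mul, Matrix.mul_nonsing_inv _ hM, mconj_one]

lemma posDef_conj_mul {Y C : Matrix (Fin k) (Fin k) ℂ} (hY : Y.PosDef) (hC : IsUnit C) :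
    (Cᴴ * Y * C).PosDef := by
  refine Matrix.PosDef.of_dotProduct_mulVec_pos (Matrix.isHermitian_conjTranspose_mul_mul C hY.1) (fun x hx => ?_)
  have hCx : C *ᵥ x ≠ 0 := by
    intro h
    exact hx ((Matrix.mulVec_injective_iff_isUnit.mpr hC).eq_iff.mp (by simpa using h))
  have h := hY.dotProduct_mulVec_pos hCx
  simpa only [Matrix.star_mulVec, Matrix.dotProduct_mulVec, Matrix.vecMul_vecMul] using h

section RingLemmas

variable {Rng : Type*} [Ring Rng]

lemma aux_W2 (s si a ah q qi p pi : Rng)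
    (hs : s * si = 1) (hp : p * pi = 1) (hq : qi * q = 1)
    (hW : ah * si * a = p - q) :
    (s + a * qi * ah) * (si - si * a * pi * (ah * si)) = 1 := by
  have key : qi * (ah * si * a) * pi = qi - pi := by
    rw [hW]
    calc qi * (p - q) * pi = qi * (p * pi) - (qi * q) * pi := by noncomm_ring
    _ = qi - pi := by rw [hp, hq]; noncomm_ring
  calc (s + a * qi * ah) * (si - si * a * pi * (ah * si))
      = s * si - (s * si) * (a * (pi * (ah * si))) + a * (qi * (ah * si))
        - a * (qi * (ah * si * a) * pi) * (ah * si) := by noncomm_ring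
    _ = 1 - 1 * (a * (pi * (ah * si))) + a * (qi * (ah * si))
        - a * (qi - pi) * (ah * si) := by rw [hs, key]
    _ = 1 := by noncomm_ring

lemma aux_W3 (a ah si p pi q : Rng) (hp : p * pi = 1) (hp' : pi * p = 1)
    (hW : ah * si * a = p - q) :
    ah * (si - si * a * pi * (ah * si)) * a = q - q * pi * q := by
  have h1 : ah * (si - si * a * pi * (ah * si)) * a
      = (ah * si * a) - (ah * si * a) * pi * (ah * si * a) := by noncomm_ring
  rw [h1, hW]
  calc (p - q) - (p - q) * pi * (p - q)
      = p - q - (p * pi) * (p - q) + q * (pi * p) - q * pi * q := by noncomm_ring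
    _ = q - q * pi * q := by rw [hp, hp']; noncomm_ring

end RingLemmas

lemma aux_W1 {k l : ℕ} (p pi : Matrix (Fin k) (Fin k) ℂ) (b : Matrix (Fin k) (Fin l) ℂ)
    (bh : Matrix (Fin l) (Fin k) ℂ) (r ri mm mi : Matrix (Fin l) (Fin l) ℂ)
    (hpi : pi * p = 1) (hri : ri * r = 1) (hmi : mm * mi = 1)
    (hmm : bh * p * b = mm - r) :
    (pi + b * ri * bh) * (p - p * b * mi * (bh * p)) = 1 := by
  have c1 : ∀ Z : Matrix (Fin k) (Fin k) ℂ, pi * (p * Z) = Z := fun Z => by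
    rw [← Matrix.mul_assoc, hpi, Matrix.one_mul]
  have c2 : ∀ Z : Matrix (Fin l) (Fin k) ℂ, mm * (mi * Z) = Z := fun Z => by
    rw [← Matrix.mul_assoc, hmi, Matrix.one_mul]
  have c3 : ∀ Z : Matrix (Fin l) (Fin k) ℂ, ri * (r * Z) = Z := fun Z => by
    rw [← Matrix.mul_assoc, hri, Matrix.one_mul]
  have c4 : ∀ Z : Matrix (Fin l) (Fin k) ℂ, bh * (p * (b * Z)) = mm * Z - r * Z := fun Z => by
    rw [← Matrix.mul_assoc, ← Matrix.mul_assoc, hmm, Matrix.sub_mul]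
  simp only [Matrix.add_mul, Matrix.mul_sub, Matrix.sub_mul, Matrix.mul_assoc,
    c1, c2, c3, c4, hpi]
  abel


end Helpers

/-- If `P > 0` solves the anti-Riccati equation, then, with `s` the
(unique) Hermitian positive definite square root `Q₀^{1/2}` of `Q₀` and
`A = Q₀^{-#/2} A₂ Q⁻¹ Q₀^{-1/2}`, the matrix
`X = Q₀^{-1/2}(P⁻¹ + (A₂Q⁻¹A₂^H)^# + (B₂R⁻¹B₂^H)^#)Q₀^{-1/2}` is Hermitian positive
definite and satisfies `X + A^H X^{-#} A = I`. -/
theorem antiRiccati_to_nonlinearEq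
    (A₂ : Matrix (Fin n) (Fin n) ℂ) (B₂ : Matrix (Fin n) (Fin m) ℂ)
    (Q : Matrix (Fin n) (Fin n) ℂ) (R : Matrix (Fin m) (Fin m) ℂ)
    (hQ : Q.PosDef) (hR : R.PosDef)
    (P : Matrix (Fin n) (Fin n) ℂ) (hP : P.PosDef) (heq : AntiRiccati A₂ B₂ Q R P)
    (s : Matrix (Fin n) (Fin n) ℂ) (hs : s.PosDef) (hsq : s * s = Qzero A₂ B₂ Q R)
    (A : Matrix (Fin n) (Fin n) ℂ) (hA : A = (mconj s)⁻¹ * A₂ * Q⁻¹ * s⁻¹)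
    (X : Matrix (Fin n) (Fin n) ℂ)
    (hX : X = s⁻¹ * (P⁻¹ + mconj (A₂ * Q⁻¹ * A₂ᴴ) + mconj (B₂ * R⁻¹ * B₂ᴴ)) * s⁻¹) :
    X.PosDef ∧ X + Aᴴ * (mconj X)⁻¹ * A = 1 := by
  classical
  -- basic abbreviations
  set Pc : Matrix (Fin n) (Fin n) ℂ := mconj P with hPc_def
  have hPc : Pc.PosDef := mconj_posDef hP
  set M1 : Matrix (Fin m) (Fin m) ℂ := R + B₂ᴴ * Pc * B₂ with hM1_def
  have hM1 : M1.PosDef := hR.add_posSemidef (hPc.posSemidef.conjTranspose_mul_mul_same B₂)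
  set S : Matrix (Fin n) (Fin n) ℂ := Pc⁻¹ + B₂ * R⁻¹ * B₂ᴴ with hS_def
  have hS : S.PosDef := hPc.inv.add_posSemidef (hR.inv.posSemidef.mul_mul_conjTranspose_same B₂)
  set T : Matrix (Fin n) (Fin n) ℂ := S + A₂ * Q⁻¹ * A₂ᴴ with hT_def
  have hT : T.PosDef := hS.add_posSemidef (hQ.inv.posSemidef.mul_mul_conjTranspose_same A₂)
  set G : Matrix (Fin n) (Fin n) ℂ := mconj (A₂ * Q⁻¹ * A₂ᴴ) with hG_def
  set H : Matrix (Fin n) (Fin n) ℂ := mconj (B₂ * R⁻¹ * B₂ᴴ) with hH_def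
  have hG : G.PosSemidef := mconj_posSemidef (hQ.inv.posSemidef.mul_mul_conjTranspose_same A₂)
  have hH : H.PosSemidef := mconj_posSemidef (hR.inv.posSemidef.mul_mul_conjTranspose_same B₂)
  set Y : Matrix (Fin n) (Fin n) ℂ := P⁻¹ + G + H with hY_def
  have hY : Y.PosDef := (hP.inv.add_posSemidef hG).add_posSemidef hH
  set sc : Matrix (Fin n) (Fin n) ℂ := mconj s with hsc_def
  have hsc : sc.PosDef := mconj_posDef hs
  -- determinant unit facts
  have dP : IsUnit P.det := (Matrix.isUnit_iff_isUnit_det _).1 hP.isUnit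
  have dQ : IsUnit Q.det := (Matrix.isUnit_iff_isUnit_det _).1 hQ.isUnit
  have dR : IsUnit R.det := (Matrix.isUnit_iff_isUnit_det _).1 hR.isUnit
  have dPc : IsUnit Pc.det := (Matrix.isUnit_iff_isUnit_det _).1 hPc.isUnit
  have dM1 : IsUnit M1.det := (Matrix.isUnit_iff_isUnit_det _).1 hM1.isUnit
  have dS : IsUnit S.det := (Matrix.isUnit_iff_isUnit_det _).1 hS.isUnit
  have dT : IsUnit T.det := (Matrix.isUnit_iff_isUnit_det _).1 hT.isUnit
  have ds : IsUnit s.det := (Matrix.isUnit_iff_isUnit_det _).1 hs.isUnit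
  have dsc : IsUnit sc.det := (Matrix.isUnit_iff_isUnit_det _).1 hsc.isUnit
  -- step 1: S⁻¹ = Pc - Pc * B₂ * M1⁻¹ * (B₂ᴴ * Pc)  (Woodbury)
  have Sinv : S⁻¹ = Pc - Pc * B₂ * M1⁻¹ * (B₂ᴴ * Pc) :=
    Matrix.inv_eq_right_inv <| aux_W1 Pc Pc⁻¹ B₂ B₂ᴴ R R⁻¹ M1 M1⁻¹
      (Matrix.nonsing_inv_mul _ dPc) (Matrix.nonsing_inv_mul _ dR)
      (Matrix.mul_nonsing_inv _ dM1) (by rw [hM1_def]; abel)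
  -- step 2: the Riccati equation gives A₂ᴴ * S⁻¹ * A₂ = P - Q
  have hW : A₂ᴴ * S⁻¹ * A₂ = P - Q := by
    have h1 : A₂ᴴ * S⁻¹ * A₂
        = A₂ᴴ * Pc * A₂ - A₂ᴴ * Pc * B₂ * M1⁻¹ * (B₂ᴴ * Pc * A₂) := by
      rw [Sinv]; simp only [Matrix.mul_sub, Matrix.sub_mul, Matrix.mul_assoc]
    have h2 : -Q = A₂ᴴ * Pc * A₂ - A₂ᴴ * Pc * B₂ * M1⁻¹ * (B₂ᴴ * Pc * A₂) - P := heq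
    rw [← h1] at h2
    have h3 : A₂ᴴ * S⁻¹ * A₂ - P = -Q := h2.symm
    rw [sub_eq_iff_eq_add] at h3
    rw [h3]; abel
  -- step 3: T⁻¹ explicit (second Woodbury)
  have Tinv : T⁻¹ = S⁻¹ - S⁻¹ * A₂ * P⁻¹ * (A₂ᴴ * S⁻¹) :=
    Matrix.inv_eq_right_inv <| aux_W2 S S⁻¹ A₂ A₂ᴴ Q Q⁻¹ P P⁻¹
      (Matrix.mul_nonsing_inv _ dS) (Matrix.mul_nonsing_inv _ dP)
      (Matrix.nonsing_inv_mul _ dQ) hW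
  -- step 4: A₂ᴴ * T⁻¹ * A₂ = Q - Q * P⁻¹ * Q
  have key3 : A₂ᴴ * T⁻¹ * A₂ = Q - Q * P⁻¹ * Q := by
    rw [Tinv]
    exact aux_W3 A₂ A₂ᴴ S⁻¹ P P⁻¹ Q (Matrix.mul_nonsing_inv _ dP)
      (Matrix.nonsing_inv_mul _ dP) hW
  -- X in terms of Y
  have hXY : X = s⁻¹ * Y * s⁻¹ := hX
  -- X is positive definite
  have hXpd : X.PosDef := by
    have h := posDef_conj_mul hY hs.inv.isUnit
    rwa [hs.inv.isHermitian.eq, ← hXY] at h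
  refine ⟨hXpd, ?_⟩
  -- conjugate of X
  have hmX : mconj X = sc⁻¹ * T * sc⁻¹ := by
    rw [hXY, hY_def, hG_def, hH_def, hsc_def, hT_def, hS_def, hPc_def]
    rw [mconj_mul, mconj_mul, mconj_inv ds, mconj_add, mconj_add, mconj_inv dP,
      mconj_mconj, mconj_mconj]
    congr 1
    congr 1
    abel
  have hmXinv : (mconj X)⁻¹ = sc * T⁻¹ * sc := by
    rw [hmX]
    apply Matrix.inv_eq_right_inv
    calc (sc⁻¹ * T * sc⁻¹) * (sc * T⁻¹ * sc)
        = sc⁻¹ * (T * ((sc⁻¹ * sc) * T⁻¹) * sc) := by noncomm_ring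
      _ = sc⁻¹ * (T * T⁻¹) * sc := by rw [Matrix.nonsing_inv_mul _ dsc]; noncomm_ring
      _ = (sc⁻¹ * sc) := by rw [Matrix.mul_nonsing_inv _ dT]; noncomm_ring
      _ = 1 := Matrix.nonsing_inv_mul _ dsc
  -- conjugate transpose of A
  have hAH : Aᴴ = s⁻¹ * Q⁻¹ * A₂ᴴ * sc⁻¹ := by
    rw [hA]
    simp only [Matrix.conjTranspose_mul]
    rw [hs.inv.isHermitian.eq, hQ.inv.isHermitian.eq, hsc.inv.isHermitian.eq]
    noncomm_ring
  -- middle reduction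
  have hmid : Aᴴ * (mconj X)⁻¹ * A = s⁻¹ * (Q⁻¹ - P⁻¹) * s⁻¹ := by
    rw [hAH, hmXinv, hA]
    calc (s⁻¹ * Q⁻¹ * A₂ᴴ * sc⁻¹) * (sc * T⁻¹ * sc) * (sc⁻¹ * A₂ * Q⁻¹ * s⁻¹)
        = s⁻¹ * Q⁻¹ * (A₂ᴴ * ((sc⁻¹ * sc) * T⁻¹ * (sc * sc⁻¹)) * A₂) * Q⁻¹ * s⁻¹ := by
          noncomm_ring
      _ = s⁻¹ * Q⁻¹ * (A₂ᴴ * T⁻¹ * A₂) * Q⁻¹ * s⁻¹ := by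
          rw [Matrix.nonsing_inv_mul _ dsc, Matrix.mul_nonsing_inv _ dsc]; noncomm_ring
      _ = s⁻¹ * (Q⁻¹ * (Q - Q * P⁻¹ * Q) * Q⁻¹) * s⁻¹ := by rw [key3]; noncomm_ring
      _ = s⁻¹ * ((Q⁻¹ * Q) * Q⁻¹ - (Q⁻¹ * Q) * P⁻¹ * (Q * Q⁻¹)) * s⁻¹ := by noncomm_ring
      _ = s⁻¹ * (Q⁻¹ - P⁻¹) * s⁻¹ := by
          rw [Matrix.nonsing_inv_mul _ dQ, Matrix.mul_nonsing_inv _ dQ]; noncomm_ring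
  -- finish
  have hQ0 : Y + (Q⁻¹ - P⁻¹) = s * s := by
    rw [hsq]
    simp only [Qzero, hY_def, hG_def, hH_def]
    abel
  calc X + Aᴴ * (mconj X)⁻¹ * A
      = s⁻¹ * Y * s⁻¹ + s⁻¹ * (Q⁻¹ - P⁻¹) * s⁻¹ := by rw [hmid, hXY]
    _ = s⁻¹ * (Y + (Q⁻¹ - P⁻¹)) * s⁻¹ := by noncomm_ring
    _ = (s⁻¹ * s) * (s * s⁻¹) := by rw [hQ0]; noncomm_ring
    _ = 1 := by rw [Matrix.nonsing_inv_mul _ ds, Matrix.mul_nonsing_inv _ ds, one_mul]
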